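/- For the complete graph K_n with n ∈ {2,3,4}, M̂_R = (1/n)J if and only if E[cos(nR)] = 1 − n/2; in particular such R exists (e.g., R deterministic equal to π/4 for n=2, 2π/9 for n=3, π/4 for n=4). -/

import Mathlib

open Matrix MeasureTheory Real
open scoped Matrix

/-- The all-ones matrix. -/
def allOnes (n : ℕ) : Matrix (Fin n) (Fin n) ℝ := Matrix.of fun _ _ => 1

/-- The average mixing matrix of the complete graph `K_n` under a sampling
distribution `μ`: `M̂_R = E₀∘E₀ + E₁∘E₁ + 2 E[cos (n R)] • (E₀∘E₁)`, where
`E₀ = (1/n) J` and `E₁ = I - E₀` are the spectral projections and `n` the eigenvalue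
gap of `K_n`. -/
noncomputable def ammK (n : ℕ) (μ : Measure ℝ) : Matrix (Fin n) (Fin n) ℝ :=
  ((1 / n : ℝ) • allOnes n) ⊙ ((1 / n : ℝ) • allOnes n) +
    (1 - (1 / n : ℝ) • allOnes n) ⊙ (1 - (1 / n : ℝ) • allOnes n) +
    (2 * ∫ t, Real.cos (n * t) ∂μ) •
      (((1 / n : ℝ) • allOnes n) ⊙ (1 - (1 / n : ℝ) • allOnes n))

lemma amm_iff (n : ℕ) (hn : 2 ≤ n) (μ : Measure ℝ) :
    ammK n μ = (1 / n : ℝ) • allOnes n ↔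
      ∫ t, Real.cos (n * t) ∂μ = 1 - n / 2 := by
  set c := ∫ t, Real.cos (n * t) ∂μ with hc
  have hn0 : (n : ℝ) ≠ 0 := by positivity
  constructor
  · intro h
    have h01 := congrFun (congrFun h ⟨0, by omega⟩) ⟨1, by omega⟩
    simp [ammK, allOnes, Matrix.hadamard, Matrix.add_apply, Matrix.sub_apply,
      Matrix.one_apply, Matrix.smul_apply, smul_eq_mul, Fin.mk.injEq] at h01
    field_simp at h01
    rw [hc]; linarith
  · intro h
    ext i j
    by_cases hij : i = j <;>
      simp [ammK, allOnes, Matrix.hadamard, Matrix.add_apply, Matrix.sub_apply,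
        Matrix.one_apply, Matrix.smul_apply, smul_eq_mul, hij, h] <;>
      field_simp <;> [skip; skip] <;> rw [← hc, h] <;> ring

/-- for `K_n` with `n ∈ {2,3,4}`, `M̂_R = (1/n) J` iff
`E[cos (n R)] = 1 - n/2`; in particular such an `R` exists, e.g. the deterministic
(Dirac) distribution at time `π/4` for `n = 2`, `2π/9` for `n = 3`, `π/4` for `n = 4`. -/
theorem uniform_average_mixing_completeGraph_small {n : ℕ}
    (hn : n = 2 ∨ n = 3 ∨ n = 4) :
    (∀ μ : Measure ℝ, IsProbabilityMeasure μ →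
      (ammK n μ = (1 / n : ℝ) • allOnes n ↔
        ∫ t, Real.cos (n * t) ∂μ = 1 - n / 2)) ∧
    ammK n (Measure.dirac (if n = 3 then 2 * π / 9 else π / 4)) =
      (1 / n : ℝ) • allOnes n := by
  have hn2 : 2 ≤ n := by omega
  refine ⟨fun μ _ => amm_iff n hn2 μ, ?_⟩
  rw [amm_iff n hn2, integral_dirac]
  rcases hn with h | h | h <;> subst h <;> norm_num
  · rw [show (2 : ℝ) * (π / 4) = π / 2 by ring, Real.cos_pi_div_two]
  · rw [show (3 : ℝ) * (2 * π / 9) = π - π / 3 by ring, Real.cos_pi_sub,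
      Real.cos_pi_div_three]
  · rw [show (4 : ℝ) * (π / 4) = π by ring, Real.cos_pi]
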